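/- Define P(a,b) = ∑_{i = max(0, b-a)}^{b} q^{(a-1)(b-i)} C_i(q) [a choose b-i]_q. Then for a ≥ 0 and b > 0, P satisfies the recursion P(a+1, b) = P(a, b) + q^{2a}(q^{2b} - 1) P(a, b-1). -/

import Mathlib

noncomputable section

/-- The field `ℚ(q)` of rational functions. -/
abbrev K : Type := RatFunc ℚ

/-- The indeterminate `q`. -/
def q : K := RatFunc.X

/-- The balanced quantum integer `[k] = (q^k - q^{-k})/(q - q⁻¹)`. -/
def qint (k : ℤ) : K := (q ^ k - q ^ (-k)) / (q - q⁻¹)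

/-- The quantum factorial `[k]! = [1][2]⋯[k]`. -/
def qfact : ℕ → K
  | 0 => 1
  | k + 1 => qfact k * qint ((k : ℤ) + 1)

/-- The Gaussian binomial coefficient `[c choose d] = [c]!/([c-d]![d]!)` for `c ≥ d ≥ 0`,
and `0` otherwise. -/
def qbinom (c d : ℤ) : K :=
  if d ≤ c ∧ 0 ≤ d then qfact c.toNat / (qfact (c - d).toNat * qfact d.toNat) else 0

/-- `P(a,b) = ∑_{i=max(0,b-a)}^{b} q^{(a-1)(b-i)} C_i(q) [a choose b-i]`,
with `C_i(q) = ∏_{k=i+1}^{b} (q^{2k}-1)`. -/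
def Pfun (a b : ℕ) : K :=
  ∑ i ∈ Finset.Icc (b - a) b,
    q ^ (((a : ℤ) - 1) * ((b : ℤ) - (i : ℤ))) *
      (∏ k ∈ Finset.Icc (i + 1) b, (q ^ (2 * k) - 1)) *
      qbinom (a : ℤ) ((b : ℤ) - (i : ℤ))

lemma hq : q ≠ 0 := RatFunc.X_ne_zero

lemma q_pow_ne_one (n : ℕ) (hn : 0 < n) : q ^ n ≠ 1 := by
  intro h
  have h1 : (Polynomial.X : Polynomial ℚ) ^ n = 1 := by
    apply RatFunc.algebraMap_injective ℚ
    rw [map_pow, map_one, RatFunc.algebraMap_X]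
    exact h
  have := congrArg Polynomial.natDegree h1
  simp [Polynomial.natDegree_X_pow] at this
  omega

lemma num_ne (k : ℤ) (hk : 0 < k) : q ^ k - q ^ (-k) ≠ 0 := by
  intro h
  have h2 : q ^ k = q ^ (-k) := sub_eq_zero.mp h
  have h3 : q ^ (2 * k) = 1 := by
    have h5 : q ^ (2 * k) = q ^ k * q ^ (-k) := by
      rw [← h2, ← zpow_add₀ hq]; ring_nf
    rw [h5, ← zpow_add₀ hq]
    simp
  have h4 : q ^ ((2 * k).toNat) = 1 := by
    rw [← zpow_natCast, Int.toNat_of_nonneg (by omega)]; exact h3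
  exact q_pow_ne_one (2 * k).toNat (by omega) h4

lemma qsub_ne : q - q⁻¹ ≠ 0 := by
  have := num_ne 1 one_pos
  simpa [zpow_one, zpow_neg] using this

lemma qint_ne_zero (k : ℤ) (hk : 0 < k) : qint k ≠ 0 :=
  div_ne_zero (num_ne k hk) qsub_ne

lemma qfact_ne_zero : ∀ n : ℕ, qfact n ≠ 0
  | 0 => one_ne_zero
  | n + 1 => mul_ne_zero (qfact_ne_zero n) (qint_ne_zero _ (by positivity))

lemma qint_split (s t : ℤ) : qint (s + t) = q ^ (-t) * qint s + q ^ s * qint t := by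
  unfold qint
  rw [mul_div_assoc', mul_div_assoc', ← add_div]
  congr 1
  rw [neg_add, zpow_add₀ hq s t, zpow_add₀ hq (-s) (-t), zpow_neg, zpow_neg]
  field_simp
  ring

lemma qbinom_of_neg {c d : ℤ} (h : d < 0) : qbinom c d = 0 := by
  rw [qbinom, if_neg]; omega

lemma qbinom_of_gt {c d : ℤ} (h : c < d) : qbinom c d = 0 := by
  rw [qbinom, if_neg]; omega

lemma qbinom_zero_right (c : ℤ) (h : 0 ≤ c) : qbinom c 0 = 1 := by
  rw [qbinom, if_pos ⟨h, le_refl 0⟩]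
  simp [qfact, div_self (qfact_ne_zero c.toNat)]

lemma qbinom_self (c : ℤ) (h : 0 ≤ c) : qbinom c c = 1 := by
  rw [qbinom, if_pos ⟨le_refl c, h⟩]
  simp [qfact, div_self (qfact_ne_zero c.toNat)]

lemma pascal_nat (a m : ℕ) (h1 : 1 ≤ m) (h2 : m ≤ a) :
    qfact (a + 1) / (qfact (a + 1 - m) * qfact m) =
      q ^ (-(m : ℤ)) * (qfact a / (qfact (a - m) * qfact m)) +
      q ^ ((a : ℤ) + 1 - m) * (qfact a / (qfact (a + 1 - m) * qfact (m - 1))) := by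
  have key : qint ((a : ℤ) + 1) =
      q ^ (-(m : ℤ)) * qint ((a : ℤ) + 1 - m) + q ^ ((a : ℤ) + 1 - m) * qint m := by
    have := qint_split ((a : ℤ) + 1 - m) m
    rwa [sub_add_cancel] at this
  have e1 : qfact (a + 1) = qfact a * qint ((a : ℤ) + 1) := rfl
  have e2 : qfact (a + 1 - m) = qfact (a - m) * qint ((a : ℤ) + 1 - m) := by
    rw [show a + 1 - m = (a - m) + 1 by omega]
    show qfact (a - m) * qint _ = _
    rw [show ((a - m : ℕ) : ℤ) + 1 = (a : ℤ) + 1 - m by omega]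
  have e3 : qfact m = qfact (m - 1) * qint (m : ℤ) := by
    rw [show m = (m - 1) + 1 by omega]
    show qfact (m - 1) * qint _ = _
    rw [show ((m - 1 : ℕ) : ℤ) + 1 = ((m - 1 : ℕ) + 1 : ℕ) by push_cast; ring,
      show (m - 1) + 1 = m by omega]
  have n1 := qfact_ne_zero a
  have n2 := qfact_ne_zero (a - m)
  have n3 := qfact_ne_zero (m - 1)
  have n4 : qint ((a : ℤ) + 1 - m) ≠ 0 := qint_ne_zero _ (by omega)
  have n5 : qint (m : ℤ) ≠ 0 := qint_ne_zero _ (by omega)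
  rw [e1, e2, e3, key, mul_div_assoc', mul_div_assoc',
    div_add_div _ _ (mul_ne_zero n2 (mul_ne_zero n3 n5))
      (mul_ne_zero (mul_ne_zero n2 n4) n3),
    div_eq_div_iff
      (mul_ne_zero (mul_ne_zero n2 n4) (mul_ne_zero n3 n5))
      (mul_ne_zero (mul_ne_zero n2 (mul_ne_zero n3 n5)) (mul_ne_zero (mul_ne_zero n2 n4) n3))]
  ring

lemma qbinom_pascal (a : ℕ) (j : ℤ) :
    qbinom ((a : ℤ) + 1) j = q ^ (-j) * qbinom a j + q ^ ((a : ℤ) + 1 - j) * qbinom a (j - 1) := by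
  rcases lt_or_ge j 0 with h | h
  · rw [qbinom_of_neg h, qbinom_of_neg h, qbinom_of_neg (show j - 1 < 0 by omega)]; ring
  obtain ⟨m, rfl⟩ := Int.eq_ofNat_of_zero_le h
  rcases Nat.eq_zero_or_pos m with rfl | hm
  · rw [show ((0 : ℕ) : ℤ) = 0 from rfl, qbinom_zero_right _ (by omega),
      qbinom_zero_right _ (by omega), qbinom_of_neg (by omega)]
    simp
  rcases lt_trichotomy ((m : ℕ) : ℤ) ((a : ℤ) + 1) with hja | hja | hja
  · have h1 : 1 ≤ m := hm
    have h2 : m ≤ a := by omega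
    unfold qbinom
    rw [if_pos ⟨by omega, by omega⟩, if_pos ⟨by omega, by omega⟩, if_pos ⟨by omega, by omega⟩]
    rw [show ((a : ℤ) + 1).toNat = a + 1 by omega, show ((a : ℤ) + 1 - m).toNat = a + 1 - m by omega,
      show ((m : ℕ) : ℤ).toNat = m by omega, show ((a : ℤ)).toNat = a by omega,
      show ((a : ℤ) - m).toNat = a - m by omega,
      show (((m : ℕ) : ℤ) - 1).toNat = m - 1 by omega,
      show ((a : ℤ) - (((m : ℕ) : ℤ) - 1)).toNat = a + 1 - m by omega]
    exact pascal_nat a m h1 h2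
  · rw [hja, qbinom_self _ (by omega), qbinom_of_gt (by omega),
      show (a : ℤ) + 1 - 1 = (a : ℤ) by ring, qbinom_self _ (by omega)]
    simp
  · rw [qbinom_of_gt (by omega), qbinom_of_gt (by omega),
      qbinom_of_gt (show (a : ℤ) < (m : ℤ) - 1 by omega)]
    ring


lemma Pfun_eq (a b : ℕ) :
    Pfun a b = ∑ j ∈ Finset.range (b + 1),
      q ^ (((a : ℤ) - 1) * (j : ℤ)) *
        (∏ k ∈ Finset.Icc (b + 1 - j) b, (q ^ (2 * k) - 1)) * qbinom (a : ℤ) (j : ℤ) := by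
  have step1 : Pfun a b = ∑ i ∈ Finset.range (b + 1),
      q ^ (((a : ℤ) - 1) * ((b : ℤ) - (i : ℤ))) *
        (∏ k ∈ Finset.Icc (i + 1) b, (q ^ (2 * k) - 1)) *
        qbinom (a : ℤ) ((b : ℤ) - (i : ℤ)) := by
    rw [Pfun]
    apply Finset.sum_subset
    · intro i hi
      simp only [Finset.mem_Icc] at hi
      simp only [Finset.mem_range]
      omega
    · intro i hi hni
      simp only [Finset.mem_range] at hi
      simp only [Finset.mem_Icc] at hni
      have : (a : ℤ) < (b : ℤ) - (i : ℤ) := by omega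
      rw [qbinom_of_gt this, mul_zero]
  rw [step1, ← Finset.sum_range_reflect]
  apply Finset.sum_congr rfl
  intro j hj
  simp only [Finset.mem_range] at hj
  rw [show b + 1 - 1 - j = b - j by omega,
    show ((b - j : ℕ) : ℤ) = (b : ℤ) - (j : ℤ) by omega,
    show (b : ℤ) - ((b : ℤ) - (j : ℤ)) = (j : ℤ) by ring,
    show b - j + 1 = b + 1 - j by omega]


/-- The recursion `P(a+1,b) = P(a,b) + q^{2a}(q^{2b} - 1) P(a,b-1)` for `b > 0`. -/
theorem Pfun_recursion (a b : ℕ) (hb : 0 < b) :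
    Pfun (a + 1) b = Pfun a b + q ^ (2 * a) * (q ^ (2 * b) - 1) * Pfun a (b - 1) := by
  obtain ⟨n, rfl⟩ := Nat.exists_eq_succ_of_ne_zero hb.ne'
  simp only [Nat.succ_eq_add_one, Nat.add_sub_cancel]
  rw [Pfun_eq (a + 1) (n + 1), Pfun_eq a (n + 1), Pfun_eq a n]
  have LHS_eq : ∀ j ∈ Finset.range (n + 1 + 1),
      q ^ ((((a + 1 : ℕ) : ℤ) - 1) * (j : ℤ)) *
          (∏ k ∈ Finset.Icc (n + 1 + 1 - j) (n + 1), (q ^ (2 * k) - 1)) *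
          qbinom ((a + 1 : ℕ) : ℤ) (j : ℤ)
        = q ^ (((a : ℤ) - 1) * (j : ℤ)) *
            (∏ k ∈ Finset.Icc (n + 1 + 1 - j) (n + 1), (q ^ (2 * k) - 1)) *
            qbinom (a : ℤ) (j : ℤ)
          + q ^ ((a : ℤ) * (j : ℤ) + ((a : ℤ) + 1 - (j : ℤ))) *
            (∏ k ∈ Finset.Icc (n + 1 + 1 - j) (n + 1), (q ^ (2 * k) - 1)) *
            qbinom (a : ℤ) ((j : ℤ) - 1) := by
    intro j hj
    rw [show ((a + 1 : ℕ) : ℤ) = (a : ℤ) + 1 by push_cast; ring, qbinom_pascal,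
      show ((a : ℤ) + 1) - 1 = (a : ℤ) by ring]
    have E1 : q ^ ((a : ℤ) * (j : ℤ)) * q ^ (-(j : ℤ)) = q ^ (((a : ℤ) - 1) * (j : ℤ)) := by
      rw [← zpow_add₀ hq]; congr 1; ring
    have E2 : q ^ ((a : ℤ) * (j : ℤ)) * q ^ ((a : ℤ) + 1 - (j : ℤ)) =
        q ^ ((a : ℤ) * (j : ℤ) + ((a : ℤ) + 1 - (j : ℤ))) := (zpow_add₀ hq _ _).symm
    rw [mul_add]
    congr 1
    · rw [← E1]; ring
    · rw [← E2]; ring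
  rw [Finset.sum_congr rfl LHS_eq, Finset.sum_add_distrib]
  congr 1
  rw [Finset.sum_range_succ']
  rw [show q ^ ((a : ℤ) * ((0 : ℕ) : ℤ) + ((a : ℤ) + 1 - ((0 : ℕ) : ℤ))) *
      (∏ k ∈ Finset.Icc (n + 1 + 1 - 0) (n + 1), (q ^ (2 * k) - 1)) *
      qbinom (a : ℤ) (((0 : ℕ) : ℤ) - 1) = 0 by
    rw [qbinom_of_neg (by omega), mul_zero]]
  rw [add_zero, Finset.mul_sum]
  apply Finset.sum_congr rfl
  intro j hj
  simp only [Finset.mem_range] at hj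
  rw [show (((j + 1 : ℕ)) : ℤ) - 1 = (j : ℤ) by push_cast; ring,
    show n + 1 + 1 - (j + 1) = n + 1 - j by omega,
    Finset.prod_Icc_succ_top (show n + 1 - j ≤ n + 1 by omega),
    show q ^ ((a : ℤ) * (((j + 1 : ℕ)) : ℤ) + ((a : ℤ) + 1 - (((j + 1 : ℕ)) : ℤ))) =
      q ^ (((a : ℤ) - 1) * (j : ℤ)) * q ^ (2 * a) by
      rw [show (a : ℤ) * (((j + 1 : ℕ)) : ℤ) + ((a : ℤ) + 1 - (((j + 1 : ℕ)) : ℤ)) =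
        ((a : ℤ) - 1) * (j : ℤ) + ((2 * a : ℕ) : ℤ) by push_cast; ring,
        zpow_add₀ hq, zpow_natCast]]
  ring

end
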